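/- Let v = (v₁,v₂) ∈ ℤ² be primitive with v₁, v₂ > 0, and let x, y be the integers with y ≤ 0, x ≥ 0, x·v₁ + y·v₂ = 1, 0 ≤ −y < v₁, 0 ≤ x < v₂. Define φ(a,b) = ab/(a+b) for a,b ≥ 0 with a+b > 0 and φ(a,b) = min{a,b} otherwise. Then φ(v) − φ(−y, x) − φ(v₁+y, v₂−x) = 1 / ((v₁+v₂)(x−y)(v₁+v₂−x+y)). -/

import Mathlib

/-- The conical concave function associated to a nef toric b-divisor on ℙ²:
`φ(a,b) = ab/(a+b)` if `a,b ≥ 0` and `a+b > 0` (so `φ(0,0) = 0`), and `min a b` otherwise. -/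
noncomputable def phiP2 (p : ℝ × ℝ) : ℝ :=
  if 0 ≤ p.1 ∧ 0 ≤ p.2 ∧ 0 < p.1 + p.2 then p.1 * p.2 / (p.1 + p.2)
  else if p = (0, 0) then 0 else min p.1 p.2

theorem jumping_function_value (v₁ v₂ x y : ℤ) (h₁ : 0 < v₁) (h₂ : 0 < v₂)
    (hprim : Int.gcd v₁ v₂ = 1)
    (hy : y ≤ 0) (hx : 0 ≤ x) (hbez : x * v₁ + y * v₂ = 1)
    (hy₂ : -y < v₁) (hx₂ : x < v₂) :
    phiP2 ((v₁ : ℝ), (v₂ : ℝ)) - phiP2 ((-y : ℤ), (x : ℝ)) -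
        phiP2 (((v₁ + y : ℤ) : ℝ), ((v₂ - x : ℤ) : ℝ)) =
      1 / (((v₁ + v₂ : ℤ) : ℝ) * ((x - y : ℤ) : ℝ) * ((v₁ + v₂ - x + y : ℤ) : ℝ)) := by
  have hxy : 0 < x - y := by
    by_contra h
    have hx0 : x = 0 := by omega
    have hy0 : y = 0 := by omega
    simp [hx0, hy0] at hbez
  have h1R : (0:ℝ) < (v₁ : ℝ) := by exact_mod_cast h₁
  have h2R : (0:ℝ) < (v₂ : ℝ) := by exact_mod_cast h₂
  have hxR : (0:ℝ) ≤ (x : ℝ) := by exact_mod_cast hx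
  have hyR : (0:ℝ) ≤ (-y : ℝ) := by
    have : (0:ℤ) ≤ -y := by omega
    exact_mod_cast this
  have hxyR : (0:ℝ) < (x : ℝ) - (y : ℝ) := by
    have := hxy; push_cast [← Int.cast_sub]; exact_mod_cast hxy
  have h3R : (0:ℝ) < (v₁ : ℝ) + (y : ℝ) := by
    have : (0:ℤ) < v₁ + y := by omega
    exact_mod_cast this
  have h4R : (0:ℝ) < (v₂ : ℝ) - (x : ℝ) := by
    have : (0:ℤ) < v₂ - x := by omega
    exact_mod_cast this
  have hbezR : (x : ℝ) * (v₁ : ℝ) + (y : ℝ) * (v₂ : ℝ) = 1 := by exact_mod_cast hbez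
  have e1 : phiP2 ((v₁ : ℝ), (v₂ : ℝ)) = (v₁ : ℝ) * v₂ / (v₁ + v₂) := by
    rw [phiP2, if_pos]; exact ⟨h1R.le, h2R.le, by linarith⟩
  have e2 : phiP2 ((-y : ℤ), (x : ℝ)) = (-(y:ℝ)) * x / (-(y:ℝ) + x) := by
    rw [phiP2, if_pos]
    · push_cast; ring_nf
    · push_cast; exact ⟨hyR, hxR, by linarith⟩
  have e3 : phiP2 (((v₁ + y : ℤ) : ℝ), ((v₂ - x : ℤ) : ℝ)) =
      ((v₁:ℝ) + y) * ((v₂:ℝ) - x) / ((v₁:ℝ) + y + ((v₂:ℝ) - x)) := by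
    rw [phiP2, if_pos]
    · push_cast; ring_nf
    · push_cast; exact ⟨h3R.le, h4R.le, by linarith⟩
  rw [e1, e2, e3]
  push_cast
  have d1 : (v₁:ℝ) + v₂ ≠ 0 := by positivity
  have d2 : -(y:ℝ) + x ≠ 0 := by linarith
  have d3 : (v₁:ℝ) + y + ((v₂:ℝ) - x) ≠ 0 := by linarith
  have d4 : (x:ℝ) - y ≠ 0 := by linarith
  have d5 : (v₁:ℝ) + v₂ - x + y ≠ 0 := by linarith
  field_simp
  linear_combination (((x:ℝ)*v₁+(y:ℝ)*v₂+1) * ((x:ℝ)-y) * ((v₁:ℝ)+v₂-x+y)) * hbezR
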